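/- Let N ≥ 2 be an integer, r > 0 and ν ∈ ℝ. Define X_j(s,t) = r·e^{−2i(ν² − (N−1)/r²) t}·e^{i s ν}·e^{2πi(j−1)/N} for j = 1,…,N. Then X_j(s,t) ≠ X_k(s,t) for all j ≠ k, and the family (X₁,…,X_N) solves the Klein–Majda–Damodaran system with all circulations κ_j = 2 and all α_j = 1, i.e. ∂_t X_j = 2i ∂_s² X_j + 2i Σ_{k≠j} 2 (X_j − X_k)/|X_j − X_k|² for every j, s, t. -/

import Mathlib

open Filter Finset

noncomputable section

/-- The helical polygon family
`X_j(s,t) = r e^{−2i(ν² − (N−1)/r²)t} e^{isν} e^{2πi(j−1)/N}`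
(indices `j : Fin N` represent `j+1`). -/
def helixFamily (N : ℕ) (r ν : ℝ) (j : Fin N) (s t : ℝ) : ℂ :=
  (r : ℂ)
    * Complex.exp (-2 * Complex.I * (((ν ^ 2 - ((N : ℝ) - 1) / r ^ 2 : ℝ)) : ℂ) * (t : ℂ))
    * Complex.exp (Complex.I * (s : ℂ) * (ν : ℂ))
    * Complex.exp (2 * (Real.pi : ℂ) * Complex.I * ((j : ℕ) : ℂ) / (N : ℂ))

namespace KMD

/-- Derivative of `y ↦ c e^{a y}` along the real line. -/
lemma deriv_cexp_real (c a : ℂ) (x : ℝ) :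
    deriv (fun y : ℝ => c * Complex.exp (a * y)) x = c * a * Complex.exp (a * x) := by
  have h1 : HasDerivAt (fun z : ℂ => Complex.exp (a * z)) (Complex.exp (a * x) * (a * 1)) (x : ℂ) :=
    (Complex.hasDerivAt_exp (a * x)).comp (x : ℂ) ((hasDerivAt_id (x : ℂ)).const_mul a)
  have h2 : HasDerivAt (fun y : ℝ => c * Complex.exp (a * y))
      (c * (Complex.exp (a * x) * (a * 1))) x := (h1.comp_ofReal).const_mul c
  rw [h2.deriv]; ring

/-- The basic `N`-th root of unity `e^{2πi/N}`. -/
def omg (N : ℕ) : ℂ := Complex.exp (2 * Real.pi * Complex.I / N)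

lemma omg_prim (N : ℕ) (hN : 2 ≤ N) : IsPrimitiveRoot (omg N) N :=
  Complex.isPrimitiveRoot_exp N (by omega)

lemma omg_pow_ne_one (N : ℕ) (hN : 2 ≤ N) {m : ℕ} (h1 : 1 ≤ m) (h2 : m < N) :
    omg N ^ m ≠ 1 :=
  (omg_prim N hN).pow_ne_one_of_pos_of_lt (by omega) h2

lemma omg_ne_zero (N : ℕ) : omg N ≠ 0 := Complex.exp_ne_zero _

lemma omg_pow_ne_zero (N : ℕ) (m : ℕ) : omg N ^ m ≠ 0 := pow_ne_zero _ (omg_ne_zero N)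

lemma omg_pow_N (N : ℕ) (hN : 2 ≤ N) : omg N ^ N = 1 := (omg_prim N hN).pow_eq_one

lemma omg_pow_inj (N : ℕ) (hN : 2 ≤ N) {j k : Fin N}
    (h : omg N ^ (j : ℕ) = omg N ^ (k : ℕ)) : j = k :=
  Fin.ext ((omg_prim N hN).pow_inj j.isLt k.isLt h)

lemma conj_omg (N : ℕ) : (starRingEnd ℂ) (omg N) = (omg N)⁻¹ := by
  rw [omg, ← Complex.exp_conj, ← Complex.exp_neg]
  congr 1
  simp only [map_div₀, map_mul, Complex.conj_I, Complex.conj_ofNat, Complex.conj_ofReal,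
    map_natCast]
  ring

lemma omg_pow_sub_ne_zero (N : ℕ) (hN : 2 ≤ N) {j k : Fin N} (h : j ≠ k) :
    omg N ^ (j : ℕ) - omg N ^ (k : ℕ) ≠ 0 := by
  intro hz
  exact h (omg_pow_inj N hN (by linear_combination hz))

lemma sum_inv_one_sub (N : ℕ) (hN : 2 ≤ N) :
    ∑ m ∈ Finset.Ico 1 N, (1 - omg N ^ m)⁻¹ = ((N : ℂ) - 1) / 2 := by
  set S := ∑ m ∈ Finset.Ico 1 N, (1 - omg N ^ m)⁻¹ with hS
  have hrefl : S = ∑ m ∈ Finset.Ico 1 N, (1 - omg N ^ (N - m))⁻¹ := by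
    rw [hS]
    refine Finset.sum_nbij' (fun m => N - m) (fun m => N - m) ?_ ?_ ?_ ?_ ?_
    · intro a ha; simp only [Finset.mem_Ico] at *; omega
    · intro a ha; simp only [Finset.mem_Ico] at *; omega
    · intro a ha; simp only [Finset.mem_Ico] at ha; omega
    · intro a ha; simp only [Finset.mem_Ico] at ha; omega
    · intro a ha; simp only [Finset.mem_Ico] at ha; congr 3; omega
  have h2S : S + S = ∑ m ∈ Finset.Ico 1 N, ((1 - omg N ^ m)⁻¹ + (1 - omg N ^ (N - m))⁻¹) := by
    rw [Finset.sum_add_distrib, ← hS, ← hrefl]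
  have hterm : ∀ m ∈ Finset.Ico 1 N,
      (1 - omg N ^ m)⁻¹ + (1 - omg N ^ (N - m))⁻¹ = 1 := by
    intro m hm
    simp only [Finset.mem_Ico] at hm
    have hw : omg N ^ m ≠ 1 := omg_pow_ne_one N hN hm.1 hm.2
    have hw0 : omg N ^ m ≠ 0 := omg_pow_ne_zero N m
    have hinv : omg N ^ (N - m) = (omg N ^ m)⁻¹ := by
      refine eq_inv_of_mul_eq_one_left ?_
      rw [← pow_add]
      have h : N - m + m = N := by omega
      rw [h, omg_pow_N N hN]
    rw [hinv]
    have h1 : (1 : ℂ) - omg N ^ m ≠ 0 := fun h => hw (by linear_combination -h)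
    have h1' : omg N ^ m - 1 ≠ 0 := sub_ne_zero.mpr hw
    field_simp
    ring
  rw [Finset.sum_congr rfl hterm, Finset.sum_const] at h2S
  have hcard : (Finset.Ico 1 N).card = N - 1 := by simp
  rw [hcard, nsmul_eq_mul] at h2S
  have hc : (((N - 1 : ℕ) : ℂ)) = (N : ℂ) - 1 := by
    push_cast [Nat.cast_sub (by omega : 1 ≤ N)]; ring
  rw [hc] at h2S
  linear_combination h2S / 2

/-- The key root-of-unity sum identity. -/
lemma key_sum (N : ℕ) (hN : 2 ≤ N) (j : Fin N) :
    ∑ k ∈ Finset.univ.erase j, ((starRingEnd ℂ) (omg N ^ (j : ℕ) - omg N ^ (k : ℕ)))⁻¹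
      = ((N : ℂ) - 1) / 2 * omg N ^ (j : ℕ) := by
  have hstep : ∑ k ∈ Finset.univ.erase j,
      ((starRingEnd ℂ) (omg N ^ (j : ℕ) - omg N ^ (k : ℕ)))⁻¹
      = ∑ m ∈ Finset.Ico 1 N, omg N ^ (j : ℕ) * (1 - (1 - omg N ^ m)⁻¹) := by
    refine Finset.sum_nbij'
      (fun k : Fin N => if (j : ℕ) ≤ (k : ℕ) then (k : ℕ) - (j : ℕ) else (k : ℕ) + N - (j : ℕ))
      (fun m : ℕ => (⟨(m + (j : ℕ)) % N, Nat.mod_lt _ (by omega)⟩ : Fin N)) ?_ ?_ ?_ ?_ ?_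
    · intro k hk
      have hkj : (k : ℕ) ≠ (j : ℕ) := fun h => (Finset.mem_erase.mp hk).1 (Fin.ext h)
      have := j.isLt; have := k.isLt
      simp only [Finset.mem_Ico]
      split <;> omega
    · intro m hm
      simp only [Finset.mem_Ico] at hm
      have hj := j.isLt
      refine Finset.mem_erase.mpr ⟨?_, Finset.mem_univ _⟩
      intro h
      have hv : (m + (j : ℕ)) % N = (j : ℕ) := congrArg Fin.val h
      rcases le_or_gt N (m + (j : ℕ)) with hle | hlt
      · rw [show m + (j : ℕ) = (m + (j : ℕ) - N) + N by omega, Nat.add_mod_right,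
          Nat.mod_eq_of_lt (by omega)] at hv
        omega
      · rw [Nat.mod_eq_of_lt hlt] at hv; omega
    · intro k hk
      have hkj : (k : ℕ) ≠ (j : ℕ) := fun h => (Finset.mem_erase.mp hk).1 (Fin.ext h)
      have hj := j.isLt; have hkN := k.isLt
      apply Fin.ext
      dsimp only
      split
      · rw [show (k : ℕ) - (j : ℕ) + (j : ℕ) = (k : ℕ) by omega, Nat.mod_eq_of_lt hkN]
      · rw [show (k : ℕ) + N - (j : ℕ) + (j : ℕ) = (k : ℕ) + N by omega, Nat.add_mod_right,
          Nat.mod_eq_of_lt hkN]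
    · intro m hm
      simp only [Finset.mem_Ico] at hm
      have hj := j.isLt
      dsimp only
      show (if (j : ℕ) ≤ (m + (j : ℕ)) % N then (m + (j : ℕ)) % N - (j : ℕ)
        else (m + (j : ℕ)) % N + N - (j : ℕ)) = m
      rcases le_or_gt N (m + (j : ℕ)) with hle | hlt
      · rw [show m + (j : ℕ) = (m + (j : ℕ) - N) + N by omega, Nat.add_mod_right,
          Nat.mod_eq_of_lt (by omega)]
        split <;> omega
      · rw [Nat.mod_eq_of_lt hlt]
        split <;> omega
    · intro k hk
      have hkj : (k : ℕ) ≠ (j : ℕ) := fun h => (Finset.mem_erase.mp hk).1 (Fin.ext h)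
      have hj := j.isLt; have hkN := k.isLt
      set m : ℕ := if (j : ℕ) ≤ (k : ℕ) then (k : ℕ) - (j : ℕ) else (k : ℕ) + N - (j : ℕ)
        with hm
      have hm1 : 1 ≤ m := by rw [hm]; split <;> omega
      have hm2 : m < N := by rw [hm]; split <;> omega
      have hpow : omg N ^ (k : ℕ) = omg N ^ (j : ℕ) * omg N ^ m := by
        rw [← pow_add, hm]
        split
        · rw [show (j : ℕ) + ((k : ℕ) - (j : ℕ)) = (k : ℕ) by omega]
        · rw [show (j : ℕ) + ((k : ℕ) + N - (j : ℕ)) = (k : ℕ) + N by omega, pow_add,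
            omg_pow_N N hN, mul_one]
      have ha0 : omg N ^ (j : ℕ) ≠ 0 := omg_pow_ne_zero N _
      have hw0 : omg N ^ m ≠ 0 := omg_pow_ne_zero N _
      have hw1 : omg N ^ m ≠ 1 := omg_pow_ne_one N hN hm1 hm2
      have h1w : (1 : ℂ) - omg N ^ m ≠ 0 := fun h => hw1 (by linear_combination -h)
      have hw1' : omg N ^ m - 1 ≠ 0 := sub_ne_zero.mpr hw1
      have hconj : (starRingEnd ℂ) (omg N ^ (j : ℕ) - omg N ^ (k : ℕ))
          = (omg N ^ (j : ℕ))⁻¹ - (omg N ^ (j : ℕ) * omg N ^ m)⁻¹ := by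
        rw [map_sub, map_pow, map_pow, conj_omg, inv_pow, inv_pow, hpow]
      rw [hconj]
      have hne : (omg N ^ (j : ℕ))⁻¹ - (omg N ^ (j : ℕ) * omg N ^ m)⁻¹
          = (omg N ^ m - 1) * (omg N ^ (j : ℕ) * omg N ^ m)⁻¹ := by
        field_simp
      rw [hne, mul_inv, inv_inv]
      field_simp
      ring
  rw [hstep, ← Finset.mul_sum, Finset.sum_sub_distrib, Finset.sum_const, sum_inv_one_sub N hN]
  have hcard : (Finset.Ico 1 N).card = N - 1 := by simp
  rw [hcard, nsmul_eq_mul, mul_one]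
  have hc : (((N - 1 : ℕ) : ℂ)) = (N : ℂ) - 1 := by
    push_cast [Nat.cast_sub (by omega : 1 ≤ N)]; ring
  rw [hc]
  ring

end KMD

/-- **The rotating polygonal family of helices solves the Klein–Majda–Damodaran system**
with all circulations `κ_j = 2` and all core constants `α_j = 1`: the helices remain
pairwise disjoint and
`∂ₜ X_j = 2i ∂ₛ² X_j + 2i ∑_{k ≠ j} 2 (X_j − X_k)/|X_j − X_k|²`. -/
theorem helix_family_solves_KMD
    (N : ℕ) (hN : 2 ≤ N) (r : ℝ) (hr : 0 < r) (ν : ℝ) :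
    (∀ (j k : Fin N) (s t : ℝ), j ≠ k → helixFamily N r ν j s t ≠ helixFamily N r ν k s t) ∧
    (∀ (j : Fin N) (s t : ℝ),
      deriv (fun τ => helixFamily N r ν j s τ) t
        = 2 * Complex.I * deriv (fun σ => deriv (fun σ' => helixFamily N r ν j σ' t) σ) s
          + 2 * Complex.I * ∑ k ∈ Finset.univ.erase j,
              (2 : ℂ) * (helixFamily N r ν j s t - helixFamily N r ν k s t)
                / ((‖helixFamily N r ν j s t - helixFamily N r ν k s t‖ : ℝ) : ℂ) ^ 2) := by
  have hN0 : (N : ℂ) ≠ 0 := Nat.cast_ne_zero.mpr (by omega)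
  have hr0 : (r : ℂ) ≠ 0 := Complex.ofReal_ne_zero.mpr hr.ne'
  set c : ℝ := ν ^ 2 - ((N : ℝ) - 1) / r ^ 2 with hc
  -- the last exponential factor is a power of the root of unity
  have hfac : ∀ j : Fin N,
      Complex.exp (2 * (Real.pi : ℂ) * Complex.I * ((j : ℕ) : ℂ) / (N : ℂ))
        = KMD.omg N ^ (j : ℕ) := by
    intro j
    rw [KMD.omg, ← Complex.exp_nat_mul]
    congr 1
    ring
  -- X_j(s,t) = A(s,t) * ω^j
  have hX : ∀ (j : Fin N) (s t : ℝ),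
      helixFamily N r ν j s t
        = ((r : ℂ) * Complex.exp (-2 * Complex.I * (c : ℂ) * (t : ℂ))
            * Complex.exp (Complex.I * (s : ℂ) * (ν : ℂ))) * KMD.omg N ^ (j : ℕ) := by
    intro j s t
    rw [helixFamily, hfac]
  have hA0 : ∀ (s t : ℝ),
      ((r : ℂ) * Complex.exp (-2 * Complex.I * (c : ℂ) * (t : ℂ))
        * Complex.exp (Complex.I * (s : ℂ) * (ν : ℂ))) ≠ 0 :=
    fun s t => mul_ne_zero (mul_ne_zero hr0 (Complex.exp_ne_zero _)) (Complex.exp_ne_zero _)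
  constructor
  · intro j k s t hjk heq
    rw [hX j s t, hX k s t] at heq
    exact hjk (KMD.omg_pow_inj N hN (mul_left_cancel₀ (hA0 s t) heq))
  · intro j s t
    -- time derivative
    have hdt : deriv (fun τ => helixFamily N r ν j s τ) t
        = (-2 * Complex.I * (c : ℂ)) * helixFamily N r ν j s t := by
      have hfun : (fun τ : ℝ => helixFamily N r ν j s τ)
          = fun τ : ℝ => ((r : ℂ) * Complex.exp (Complex.I * (s : ℂ) * (ν : ℂ))
              * KMD.omg N ^ (j : ℕ)) * Complex.exp ((-2 * Complex.I * (c : ℂ)) * (τ : ℂ)) := by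
        funext τ
        rw [hX j s τ]
        ring
      rw [hfun, KMD.deriv_cexp_real, hX j s t]
      ring
    -- second space derivative
    have hin : ∀ σ : ℝ, deriv (fun σ' => helixFamily N r ν j σ' t) σ
        = (((r : ℂ) * Complex.exp (-2 * Complex.I * (c : ℂ) * (t : ℂ)) * KMD.omg N ^ (j : ℕ))
            * (Complex.I * (ν : ℂ))) * Complex.exp ((Complex.I * (ν : ℂ)) * (σ : ℂ)) := by
      intro σ
      have hfun : (fun σ' : ℝ => helixFamily N r ν j σ' t)
          = fun σ' : ℝ => ((r : ℂ) * Complex.exp (-2 * Complex.I * (c : ℂ) * (t : ℂ))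
              * KMD.omg N ^ (j : ℕ)) * Complex.exp ((Complex.I * (ν : ℂ)) * (σ' : ℂ)) := by
        funext σ'
        rw [hX j σ' t, show (Complex.I * (ν : ℂ)) * (σ' : ℂ)
          = Complex.I * (σ' : ℂ) * (ν : ℂ) by ring]
        ring
      rw [hfun, KMD.deriv_cexp_real]
    have hds2 : deriv (fun σ => deriv (fun σ' => helixFamily N r ν j σ' t) σ) s
        = (Complex.I * (ν : ℂ)) ^ 2 * helixFamily N r ν j s t := by
      have : (fun σ : ℝ => deriv (fun σ' => helixFamily N r ν j σ' t) σ)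
          = fun σ : ℝ => (((r : ℂ) * Complex.exp (-2 * Complex.I * (c : ℂ) * (t : ℂ))
              * KMD.omg N ^ (j : ℕ)) * (Complex.I * (ν : ℂ)))
              * Complex.exp ((Complex.I * (ν : ℂ)) * (σ : ℂ)) := funext hin
      rw [this, KMD.deriv_cexp_real, hX j s t, show (Complex.I * (ν : ℂ)) * (s : ℂ)
        = Complex.I * (s : ℂ) * (ν : ℂ) by ring]
      ring
    -- the interaction sum
    have habs : ∀ w : ℂ, ((‖w‖ : ℝ) : ℂ) ^ 2 = w * (starRingEnd ℂ) w := by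
      intro w
      rw [Complex.mul_conj, ← Complex.sq_norm]
      push_cast
      ring
    have hAconj : ∀ (s t : ℝ),
        ((r : ℂ) * Complex.exp (-2 * Complex.I * (c : ℂ) * (t : ℂ))
            * Complex.exp (Complex.I * (s : ℂ) * (ν : ℂ)))
          * (starRingEnd ℂ) ((r : ℂ) * Complex.exp (-2 * Complex.I * (c : ℂ) * (t : ℂ))
            * Complex.exp (Complex.I * (s : ℂ) * (ν : ℂ))) = (r : ℂ) ^ 2 := by
      intro s t
      rw [map_mul, map_mul, ← Complex.exp_conj, ← Complex.exp_conj, Complex.conj_ofReal]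
      have e1 : (starRingEnd ℂ) (-2 * Complex.I * (c : ℂ) * (t : ℂ))
          = -(-2 * Complex.I * (c : ℂ) * (t : ℂ)) := by
        simp only [map_mul, map_neg, Complex.conj_I, Complex.conj_ofReal, Complex.conj_ofNat]
        ring
      have e2 : (starRingEnd ℂ) (Complex.I * (s : ℂ) * (ν : ℂ))
          = -(Complex.I * (s : ℂ) * (ν : ℂ)) := by
        simp only [map_mul, Complex.conj_I, Complex.conj_ofReal]
        ring
      rw [e1, e2, Complex.exp_neg, Complex.exp_neg]
      field_simp

    have hsummand : ∀ k ∈ Finset.univ.erase j,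
        (2 : ℂ) * (helixFamily N r ν j s t - helixFamily N r ν k s t)
            / ((‖helixFamily N r ν j s t - helixFamily N r ν k s t‖ : ℝ) : ℂ) ^ 2
          = (2 * ((r : ℂ) * Complex.exp (-2 * Complex.I * (c : ℂ) * (t : ℂ))
              * Complex.exp (Complex.I * (s : ℂ) * (ν : ℂ))) / (r : ℂ) ^ 2)
            * ((starRingEnd ℂ) (KMD.omg N ^ (j : ℕ) - KMD.omg N ^ (k : ℕ)))⁻¹ := by
      intro k hk
      have hjk : j ≠ k := fun h => (Finset.mem_erase.mp hk).1 h.symm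
      have hz : KMD.omg N ^ (j : ℕ) - KMD.omg N ^ (k : ℕ) ≠ 0 :=
        KMD.omg_pow_sub_ne_zero N hN hjk
      have hzc : (starRingEnd ℂ) (KMD.omg N ^ (j : ℕ) - KMD.omg N ^ (k : ℕ)) ≠ 0 := by
        intro h
        apply hz
        have := congrArg (starRingEnd ℂ) h
        simpa using this
      have hdiff : helixFamily N r ν j s t - helixFamily N r ν k s t
          = ((r : ℂ) * Complex.exp (-2 * Complex.I * (c : ℂ) * (t : ℂ))
              * Complex.exp (Complex.I * (s : ℂ) * (ν : ℂ)))
            * (KMD.omg N ^ (j : ℕ) - KMD.omg N ^ (k : ℕ)) := by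
        rw [hX j s t, hX k s t]; ring
      rw [hdiff, habs, map_mul]
      rw [show ((r : ℂ) * Complex.exp (-2 * Complex.I * (c : ℂ) * (t : ℂ))
              * Complex.exp (Complex.I * (s : ℂ) * (ν : ℂ)))
            * (KMD.omg N ^ (j : ℕ) - KMD.omg N ^ (k : ℕ))
          * ((starRingEnd ℂ) ((r : ℂ) * Complex.exp (-2 * Complex.I * (c : ℂ) * (t : ℂ))
              * Complex.exp (Complex.I * (s : ℂ) * (ν : ℂ)))
            * (starRingEnd ℂ) (KMD.omg N ^ (j : ℕ) - KMD.omg N ^ (k : ℕ)))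
          = (((r : ℂ) * Complex.exp (-2 * Complex.I * (c : ℂ) * (t : ℂ))
              * Complex.exp (Complex.I * (s : ℂ) * (ν : ℂ)))
            * (starRingEnd ℂ) ((r : ℂ) * Complex.exp (-2 * Complex.I * (c : ℂ) * (t : ℂ))
              * Complex.exp (Complex.I * (s : ℂ) * (ν : ℂ))))
            * ((KMD.omg N ^ (j : ℕ) - KMD.omg N ^ (k : ℕ))
              * (starRingEnd ℂ) (KMD.omg N ^ (j : ℕ) - KMD.omg N ^ (k : ℕ))) by ring]
      have hr2 : (r : ℂ) ^ 2 ≠ 0 := pow_ne_zero _ hr0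
      rw [hAconj s t, ← div_eq_mul_inv, div_div,
        div_eq_div_iff (mul_ne_zero hr2 (mul_ne_zero hz hzc)) (mul_ne_zero hr2 hzc)]
      ring
    have hsum : ∑ k ∈ Finset.univ.erase j,
        (2 : ℂ) * (helixFamily N r ν j s t - helixFamily N r ν k s t)
            / ((‖helixFamily N r ν j s t - helixFamily N r ν k s t‖ : ℝ) : ℂ) ^ 2
        = (((N : ℂ) - 1) / (r : ℂ) ^ 2) * helixFamily N r ν j s t := by
      rw [Finset.sum_congr rfl hsummand, ← Finset.mul_sum, KMD.key_sum N hN j, hX j s t]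
      field_simp
    rw [hdt, hds2, hsum]
    have hcc : (c : ℂ) = (ν : ℂ) ^ 2 - ((N : ℂ) - 1) / (r : ℂ) ^ 2 := by
      rw [hc]; push_cast; ring
    rw [hcc, mul_pow, Complex.I_sq]
    field_simp
    ring

end
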